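/- Let ι be a finite type, F = FreeGroup ι, Φ an automorphism of F, and G = F ⋊_Φ ℤ, with t ∈ G the generator of the ℤ-factor. Assume that every Φ-periodic element of F is Φ-fixed: for all f ∈ F and all nonzero integers p, if Φ^p(f) = f then Φ(f) = f (this is the property of improved relative train track representatives of polynomially growing automorphisms invoked in the paper: periodic elements are represented by Nielsen paths). Then whenever g ∈ G and p, q are nonzero integers with g·t^p·g⁻¹ = t^q, the element g commutes with t: g·t = t·g. (Paper's Lemma 5.13.) -/

import Mathlib

open SemidirectProduct Multiplicative


/-- **Commensurating `t` implies centralizing `t`** (paper's Lemma 5.13).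
Let `F = FreeGroup ι` with `ι` finite, `Φ` an automorphism of `F` encoded by
`φ : Multiplicative ℤ →* MulAut F` with `φ (ofAdd k) = Φ ^ k`,
`G = F ⋊[φ] Multiplicative ℤ`, and `t = inr (ofAdd 1)`.  Assume every `Φ`-periodic
element of `F` is `Φ`-fixed (the Nielsen-path property of improved relative train
track representatives of polynomially growing automorphisms): for all `f ∈ F` and
nonzero `p : ℤ`, `Φ^p f = f → Φ f = f`.  Then `g·t^p·g⁻¹ = t^q` with `p, q ≠ 0`
implies `g·t = t·g`. -/
theorem commensurates_t_implies_centralizes_t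
    (ι : Type) [Finite ι]
    (Φ : MulAut (FreeGroup ι))
    (φ : Multiplicative ℤ →* MulAut (FreeGroup ι))
    (hφ : ∀ k : ℤ, φ (Multiplicative.ofAdd k) = Φ ^ k)
    (hNielsen : ∀ (f : FreeGroup ι) (p : ℤ), p ≠ 0 → (Φ ^ p) f = f → Φ f = f)
    (t : FreeGroup ι ⋊[φ] Multiplicative ℤ)
    (ht : t = SemidirectProduct.inr (Multiplicative.ofAdd (1 : ℤ)))
    (g : FreeGroup ι ⋊[φ] Multiplicative ℤ) (p q : ℤ)
    (hp : p ≠ 0) (hq : q ≠ 0)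
    (h : g * t ^ p * g⁻¹ = t ^ q) :
    g * t = t * g := by
  subst ht
  have htp : ∀ k : ℤ, (SemidirectProduct.inr (Multiplicative.ofAdd (1 : ℤ)) :
      FreeGroup ι ⋊[φ] Multiplicative ℤ) ^ k = SemidirectProduct.inr (Multiplicative.ofAdd k) := by
    intro k
    rw [← map_zpow]
    congr 1
    rw [← ofAdd_zsmul]
    simp
  rw [htp p, htp q] at h
  obtain ⟨f, a⟩ := g
  have hl := congrArg SemidirectProduct.left h
  have hr := congrArg SemidirectProduct.right h
  simp [mul_left, mul_right, inv_left, inv_right] at hl hr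
  have h1 : (φ a) * (φ (Multiplicative.ofAdd p)) * (φ a)⁻¹ = φ (Multiplicative.ofAdd p) := by
    rw [← map_inv, ← map_mul, ← map_mul, mul_comm a, mul_inv_cancel_right]
  have h2 : (φ a) ((φ (Multiplicative.ofAdd p)) ((φ a)⁻¹ f)) = (φ (Multiplicative.ofAdd p)) f := by
    have := congrArg (fun ψ : MulAut (FreeGroup ι) => ψ f) h1
    simpa using this
  rw [show (φ a)⁻¹ f = (φ a).symm f from rfl] at h2
  rw [h2, hφ p] at hl
  have hfix : (Φ ^ p) f = f := by
    have := mul_inv_eq_one.mp hl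
    exact this.symm
  have hΦ : Φ f = f := hNielsen f p hp hfix
  ext
  · simp [mul_left, hφ, hΦ]
  · simp [mul_right, mul_comm]
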